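/- Let H be a convex open subset of a Banach space X, let F, G : H → X be continuous with sup_{x∈H} ‖F(x) − G(x)‖ ≤ α, where G is Lipschitz on H with constant k > 0 and F is locally Lipschitz on H. For μ > 0 define φ(ξ) = μ·e^{ξk} + (α/k)(e^{ξk} − 1) for ξ ≥ 0. Let x₀ ∈ H, t₀ ∈ ℝ, and let u : (t₀−b, t₀+b) → H solve u' = G(u), u(t₀) = x₀, such that the closed ball of radius φ(|t−t₀|) around u(t) is contained in H for all t in the interval. Then for every x̃ ∈ H with ‖x̃ − x₀‖ ≤ μ there exists a unique solution v of v' = F(v) with v(t₀) = x̃ on (t₀−b, t₀+b) taking values in H, and moreover ‖u(t) − v(t)‖ ≤ φ(|t−t₀|) for all t in the interval. -/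

import Mathlib

open Set Metric Filter Topology

section Aux

variable {X : Type*} [NormedAddCommGroup X] [NormedSpace ℝ X]

lemma aux_ball {F : X → X} {H : Set X} (hH : IsOpen H)
    (hFl : ∀ x ∈ H, ∃ (K : NNReal) (t : Set X), t ∈ nhdsWithin x H ∧ LipschitzOnWith K F t)
    {x : X} (hx : x ∈ H) :
    ∃ (K : NNReal) (R : ℝ), 0 < R ∧ closedBall x R ⊆ H ∧ LipschitzOnWith K F (closedBall x R) := by
  obtain ⟨K, s, hs, hlip⟩ := hFl x hx
  rw [hH.nhdsWithin_eq hx] at hs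
  obtain ⟨R, hR, hball⟩ := Metric.mem_nhds_iff.1 (Filter.inter_mem hs (hH.mem_nhds hx))
  refine ⟨K, R / 2, by linarith, ?_, hlip.mono ?_⟩
  · exact (closedBall_subset_ball (by linarith)).trans (hball.trans inter_subset_right)
  · exact (closedBall_subset_ball (by linarith)).trans (hball.trans inter_subset_left)

/-- Forward-in-time uniqueness for a locally Lipschitz autonomous ODE on an open set. -/
lemma uniq_gen {F : X → X} {H : Set X} (hH : IsOpen H)
    (hFl : ∀ x ∈ H, ∃ (K : NNReal) (t : Set X), t ∈ nhdsWithin x H ∧ LipschitzOnWith K F t)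
    {a c : ℝ} {f g : ℝ → X} (hac : a ≤ c)
    (hfc : ContinuousOn f (Icc a c)) (hgc : ContinuousOn g (Icc a c))
    (hfm : ∀ t ∈ Icc a c, f t ∈ H) (hgm : ∀ t ∈ Icc a c, g t ∈ H)
    (hfd : ∀ t ∈ Ico a c, HasDerivWithinAt f (F (f t)) (Ici t) t)
    (hgd : ∀ t ∈ Ico a c, HasDerivWithinAt g (F (g t)) (Ici t) t)
    (h0 : f a = g a) : EqOn f g (Icc a c) := by
  set A := {t | t ∈ Icc a c ∧ EqOn f g (Icc a t)} with hA
  have haA : a ∈ A := by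
    refine ⟨left_mem_Icc.2 hac, fun s hs => ?_⟩
    rw [Icc_self, mem_singleton_iff] at hs
    rw [hs, h0]
  have hne : A.Nonempty := ⟨a, haA⟩
  have hbdd : BddAbove A := ⟨c, fun t ht => ht.1.2⟩
  set T := sSup A with hT
  have hTmem : T ∈ Icc a c := ⟨le_csSup hbdd haA, csSup_le hne fun t ht => ht.1.2⟩
  have hlt : ∀ s ∈ Ico a T, f s = g s := by
    intro s hs
    obtain ⟨t, htA, hst⟩ := exists_lt_of_lt_csSup hne hs.2
    exact htA.2 ⟨hs.1, hst.le⟩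
  have hfT : f T = g T := by
    rcases eq_or_lt_of_le hTmem.1 with h' | h'
    · rw [← h', h0]
    · have hnb : (𝓝[Ico a T] T).NeBot := by
        rw [← mem_closure_iff_nhdsWithin_neBot, closure_Ico h'.ne]
        exact right_mem_Icc.2 h'.le
      have hsub : Ico a T ⊆ Icc a c := fun s hs => ⟨hs.1, hs.2.le.trans hTmem.2⟩
      have h1 : Tendsto f (𝓝[Ico a T] T) (𝓝 (f T)) :=
        (hfc T hTmem).mono_left (nhdsWithin_mono _ hsub)
      have h2 : Tendsto g (𝓝[Ico a T] T) (𝓝 (g T)) :=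
        (hgc T hTmem).mono_left (nhdsWithin_mono _ hsub)
      have hev : f =ᶠ[𝓝[Ico a T] T] g :=
        eventually_of_mem self_mem_nhdsWithin fun s hs => hlt s hs
      exact tendsto_nhds_unique (h1.congr' hev) h2
  have hTeq : EqOn f g (Icc a T) := by
    intro s hs
    rcases eq_or_lt_of_le hs.2 with h | h
    · rw [h, hfT]
    · exact hlt s ⟨hs.1, h⟩
  rcases eq_or_lt_of_le hTmem.2 with hTc | hTc
  · rw [← hTc]; exact hTeq
  · exfalso
    obtain ⟨K, R, hR, hRH, hlip⟩ := aux_ball hH hFl (hfm T hTmem)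
    obtain ⟨δ₁, hδ₁, hcf⟩ := Metric.continuousWithinAt_iff.1 (hfc T hTmem) R hR
    obtain ⟨δ₂, hδ₂, hcg⟩ := Metric.continuousWithinAt_iff.1 (hgc T hTmem) R hR
    set δ := min δ₁ δ₂ with hδdef
    have hδ : 0 < δ := lt_min hδ₁ hδ₂
    set c' := min (T + δ / 2) c with hc'def
    have hTc' : T < c' := lt_min (by linarith) hTc
    have hc'c : c' ≤ c := min_le_right _ _
    have hmemI : ∀ t ∈ Ico T c', t ∈ Icc a c :=
      fun t ht => ⟨hTmem.1.trans ht.1, ht.2.le.trans hc'c⟩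
    have hdist : ∀ t ∈ Ico T c', dist t T < δ := by
      intro t ht
      rw [Real.dist_eq, abs_of_nonneg (by linarith [ht.1])]
      have := ht.2.trans_le (min_le_left _ _)
      linarith
    have heq2 : EqOn f g (Icc T c') := by
      apply ODE_solution_unique_of_mem_Icc_right
        (v := fun _ => F) (s := fun _ => closedBall (f T) R) (fun _ _ => hlip)
        (hfc.mono (Icc_subset_Icc hTmem.1 hc'c))
        (fun t ht => hfd t ⟨hTmem.1.trans ht.1, ht.2.trans_le hc'c⟩)
        (fun t ht => mem_closedBall.2
          (hcf (hmemI t ht) ((hdist t ht).trans_le (min_le_left _ _))).le)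
        (hgc.mono (Icc_subset_Icc hTmem.1 hc'c))
        (fun t ht => hgd t ⟨hTmem.1.trans ht.1, ht.2.trans_le hc'c⟩)
        (fun t ht => by
          have h := hcg (hmemI t ht) ((hdist t ht).trans_le (min_le_right _ _))
          rw [← hfT] at h
          exact mem_closedBall.2 h.le)
        hfT
    have hc'A : c' ∈ A := by
      refine ⟨⟨hTmem.1.trans hTc'.le, hc'c⟩, fun s hs => ?_⟩
      rcases le_total s T with h | h
      · exact hTeq ⟨hs.1, h⟩
      · exact heq2 ⟨h, hs.2⟩
    exact absurd (le_csSup hbdd hc'A) (not_le.2 hTc')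

/-- Backward-in-time uniqueness, by time reversal. -/
lemma uniq_gen_bwd {F : X → X} {H : Set X} (hH : IsOpen H)
    (hFl : ∀ x ∈ H, ∃ (K : NNReal) (t : Set X), t ∈ nhdsWithin x H ∧ LipschitzOnWith K F t)
    {a c : ℝ} {f g : ℝ → X} (hac : a ≤ c)
    (hfc : ContinuousOn f (Icc a c)) (hgc : ContinuousOn g (Icc a c))
    (hfm : ∀ t ∈ Icc a c, f t ∈ H) (hgm : ∀ t ∈ Icc a c, g t ∈ H)
    (hfd : ∀ t ∈ Ioc a c, HasDerivWithinAt f (F (f t)) (Iic t) t)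
    (hgd : ∀ t ∈ Ioc a c, HasDerivWithinAt g (F (g t)) (Iic t) t)
    (h0 : f c = g c) : EqOn f g (Icc a c) := by
  have hFl' : ∀ x ∈ H, ∃ (K : NNReal) (t : Set X), t ∈ nhdsWithin x H ∧
      LipschitzOnWith K (fun y => -F y) t := by
    intro x hx
    obtain ⟨K, t, ht, hl⟩ := hFl x hx
    refine ⟨1 * K, t, ht, ?_⟩
    exact LipschitzWith.id.neg.comp_lipschitzOnWith hl
  have hmap : MapsTo (fun s : ℝ => -s) (Icc (-c) (-a)) (Icc a c) :=
    fun s hs => ⟨le_neg.mp hs.2, neg_le.mp hs.1⟩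
  have key : EqOn (fun s => f (-s)) (fun s => g (-s)) (Icc (-c) (-a)) := by
    apply uniq_gen hH hFl' (by linarith)
    · exact hfc.comp continuousOn_neg hmap
    · exact hgc.comp continuousOn_neg hmap
    · exact fun s hs => hfm _ (hmap hs)
    · exact fun s hs => hgm _ (hmap hs)
    · intro t ht
      have hmem : -t ∈ Ioc a c := ⟨lt_neg.mp ht.2, neg_le.mp ht.1⟩
      have h1 := (hfd (-t) hmem).scomp (x := t)
        ((hasDerivAt_neg t).hasDerivWithinAt (s := Ici t))
        (fun s hs => mem_Iic.2 (neg_le_neg hs))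
      simpa [Function.comp_def] using h1
    · intro t ht
      have hmem : -t ∈ Ioc a c := ⟨lt_neg.mp ht.2, neg_le.mp ht.1⟩
      have h1 := (hgd (-t) hmem).scomp (x := t)
        ((hasDerivAt_neg t).hasDerivWithinAt (s := Ici t))
        (fun s hs => mem_Iic.2 (neg_le_neg hs))
      simpa [Function.comp_def] using h1
    · simpa using h0
  intro s hs
  have := key (x := -s) ⟨neg_le_neg hs.2, neg_le_neg hs.1⟩
  simpa using this

/-- A solution whose derivative is bounded by `C` while inside a ball of radius `R`,
with `C * (b - a) ≤ R/2`, stays in the ball. -/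
lemma stay_right {f f' : ℝ → X} {x : X} {a b R C : ℝ} (hab : a ≤ b) (hC : 0 < C)
    (hCb : C * (b - a) ≤ R / 2) (hR : 0 < R)
    (hfc : ContinuousOn f (Icc a b)) (hfa : f a = x)
    (hd : ∀ t ∈ Icc a b, HasDerivWithinAt f (f' t) (Icc a b) t)
    (hbd : ∀ t ∈ Icc a b, f t ∈ closedBall x R → ‖f' t‖ ≤ C) :
    ∀ t ∈ Icc a b, f t ∈ closedBall x R := by
  set S := {t | t ∈ Icc a b ∧ ∀ s ∈ Icc a t, f s ∈ closedBall x R} with hS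
  have haS : a ∈ S := by
    refine ⟨left_mem_Icc.2 hab, fun s hs => ?_⟩
    rw [show s = a from le_antisymm hs.2 hs.1, hfa]
    exact mem_closedBall_self hR.le
  have hne : S.Nonempty := ⟨a, haS⟩
  have hbdd : BddAbove S := ⟨b, fun t ht => ht.1.2⟩
  set m := sSup S with hm
  have hmIcc : m ∈ Icc a b := ⟨le_csSup hbdd haS, csSup_le hne fun t ht => ht.1.2⟩
  have ham : a ≤ m := hmIcc.1
  have hmlt : ∀ s ∈ Ico a m, f s ∈ closedBall x R := by
    intro s hs
    obtain ⟨t, htS, hst⟩ := exists_lt_of_lt_csSup hne hs.2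
    exact htS.2 s ⟨hs.1, hst.le⟩
  have hmm : f m ∈ closedBall x R := by
    rcases eq_or_lt_of_le ham with h | h
    · rw [← h, hfa]; exact mem_closedBall_self hR.le
    · have hnb : (𝓝[Ico a m] m).NeBot := by
        rw [← mem_closure_iff_nhdsWithin_neBot, closure_Ico h.ne]
        exact right_mem_Icc.2 h.le
      have hsub : Ico a m ⊆ Icc a b := fun s hs => ⟨hs.1, hs.2.le.trans hmIcc.2⟩
      have htend : Tendsto f (𝓝[Ico a m] m) (𝓝 (f m)) :=
        (hfc m hmIcc).mono_left (nhdsWithin_mono _ hsub)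
      exact isClosed_closedBall.mem_of_tendsto htend
        (eventually_of_mem self_mem_nhdsWithin hmlt)
  have hmS : m ∈ S := by
    refine ⟨hmIcc, fun s hs => ?_⟩
    rcases eq_or_lt_of_le hs.2 with h | h
    · rw [h]; exact hmm
    · exact hmlt s ⟨hs.1, h⟩
  rcases eq_or_lt_of_le hmIcc.2 with hmb | hmb
  · intro t ht
    exact hmS.2 t ⟨ht.1, ht.2.trans hmb.ge⟩
  · exfalso
    have hsub : Icc a m ⊆ Icc a b := Icc_subset_Icc_right hmIcc.2
    have hbound : ‖f m - x‖ ≤ C * (m - a) := by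
      have h1 := (convex_Icc a m).norm_image_sub_le_of_norm_hasDerivWithin_le
        (f' := f') (fun s hs => (hd s (hsub hs)).mono hsub)
        (fun s hs => hbd s (hsub hs) (hmS.2 s hs))
        (left_mem_Icc.2 ham) (right_mem_Icc.2 ham)
      rw [hfa] at h1
      rwa [Real.norm_eq_abs, abs_of_nonneg (by linarith)] at h1
    have hhalf : dist (f m) x ≤ R / 2 := by
      rw [dist_eq_norm]
      calc ‖f m - x‖ ≤ C * (m - a) := hbound
        _ ≤ C * (b - a) := by nlinarith [hmIcc.2]
        _ ≤ R / 2 := hCb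
    obtain ⟨δ, hδ, hcont⟩ := Metric.continuousWithinAt_iff.1 (hfc m hmIcc) (R / 2) (by linarith)
    set t' := min (m + δ / 2) b with ht'def
    have ht'm : m < t' := lt_min (by linarith) hmb
    have ht'S : t' ∈ S := by
      refine ⟨⟨ham.trans ht'm.le, min_le_right _ _⟩, fun s hs => ?_⟩
      rcases le_or_gt s m with h | h
      · exact hmS.2 s ⟨hs.1, h⟩
      · have hsb : s ∈ Icc a b := ⟨hs.1, hs.2.trans (min_le_right _ _)⟩
        have hsd : dist s m < δ := by
          rw [Real.dist_eq, abs_of_pos (by linarith)]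
          have := hs.2.trans (min_le_left _ _)
          linarith
        have := hcont hsb hsd
        rw [mem_closedBall]
        calc dist (f s) x ≤ dist (f s) (f m) + dist (f m) x := dist_triangle _ _ _
          _ ≤ R / 2 + R / 2 := add_le_add this.le hhalf
          _ = R := by ring
    exact absurd (le_csSup hbdd ht'S) (not_le.2 ht'm)

/-- Local existence of solutions staying in `H`, for a continuous locally Lipschitz field. -/
lemma loc_ex [CompleteSpace X] {F : X → X} {H : Set X} (hH : IsOpen H)
    (hFc : ContinuousOn F H)
    (hFl : ∀ x ∈ H, ∃ (K : NNReal) (t : Set X), t ∈ nhdsWithin x H ∧ LipschitzOnWith K F t)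
    {x : X} (hx : x ∈ H) (t₁ : ℝ) :
    ∃ ε > (0:ℝ), ∃ f : ℝ → X, f t₁ = x ∧
      ∀ t ∈ Ioo (t₁ - ε) (t₁ + ε), f t ∈ H ∧ HasDerivAt f (F (f t)) t := by
  obtain ⟨K, R, hRpos, hRH, hlip⟩ := aux_ball hH hFl hx
  obtain ⟨R1, hR1, hbd0⟩ := Metric.continuousWithinAt_iff.1 (hFc x hx) 1 one_pos
  set R' := min R (R1 / 2) with hR'def
  have hR' : 0 < R' := lt_min hRpos (by linarith)
  have hR'H : closedBall x R' ⊆ H := (closedBall_subset_closedBall (min_le_left _ _)).trans hRH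
  set C := ‖F x‖ + 1 with hCdef
  have hC : 0 < C := by positivity
  have hbd : ∀ y ∈ closedBall x R', ‖F y‖ ≤ C := by
    intro y hy
    have h1 : y ∈ H := hR'H hy
    have h2 : dist y x < R1 := by
      have := mem_closedBall.1 hy
      have h3 : R' ≤ R1 / 2 := min_le_right _ _
      linarith
    have h4 := hbd0 h1 h2
    have h5 : ‖F y‖ - ‖F x‖ ≤ ‖F y - F x‖ := norm_sub_norm_le _ _
    rw [dist_eq_norm] at h4
    linarith
  set ε := R' / (2 * C) with hεdef
  have hε : 0 < ε := by positivity
  have hCε : C * ε = R' / 2 := by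
    rw [hεdef]; field_simp
  have hpl : IsPicardLindelof (fun _ => F) (tmin := t₁ - ε) (tmax := t₁ + ε)
      ⟨t₁, by constructor <;> linarith⟩ x R'.toNNReal 0 C.toNNReal K := by
    apply IsPicardLindelof.of_time_independent
    · intro y hy
      rw [Real.coe_toNNReal _ hC.le]
      exact hbd y (by rwa [Real.coe_toNNReal _ hR'.le] at hy)
    · rw [Real.coe_toNNReal _ hR'.le]
      exact hlip.mono (closedBall_subset_closedBall (min_le_left _ _))
    · show C.toNNReal * max (t₁ + ε - t₁) (t₁ - (t₁ - ε)) ≤ (R'.toNNReal : ℝ) - ((0 : NNReal) : ℝ)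
      rw [Real.coe_toNNReal _ hC.le, Real.coe_toNNReal _ hR'.le, NNReal.coe_zero, sub_zero]
      rw [add_sub_cancel_left, sub_sub_cancel, max_self]
      rw [hCε]; linarith
  obtain ⟨f, hf0, hfd⟩ : ∃ f : ℝ → X, f t₁ = x ∧ ∀ t ∈ Icc (t₁ - ε) (t₁ + ε),
      HasDerivWithinAt f (F (f t)) (Icc (t₁ - ε) (t₁ + ε)) t :=
    hpl.exists_eq_forall_mem_Icc_hasDerivWithinAt₀
  have hfc : ContinuousOn f (Icc (t₁ - ε) (t₁ + ε)) :=
    fun t ht => (hfd t ht).continuousWithinAt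
  have hsub1 : Icc t₁ (t₁ + ε) ⊆ Icc (t₁ - ε) (t₁ + ε) := Icc_subset_Icc_left (by linarith)
  have hsub2 : Icc (t₁ - ε) t₁ ⊆ Icc (t₁ - ε) (t₁ + ε) := Icc_subset_Icc_right (by linarith)
  have hstayR : ∀ t ∈ Icc t₁ (t₁ + ε), f t ∈ closedBall x R' := by
    apply stay_right (f' := fun t => F (f t)) (by linarith) hC ?_ hR'
      (hfc.mono hsub1) hf0
      (fun t ht => (hfd t (hsub1 ht)).mono hsub1)
      (fun t ht hmem => hbd _ hmem)
    rw [add_sub_cancel_left]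
    rw [hCε]
  have hstayL : ∀ t ∈ Icc (t₁ - ε) t₁, f t ∈ closedBall x R' := by
    have hmap : MapsTo (fun s : ℝ => 2 * t₁ - s) (Icc t₁ (t₁ + ε)) (Icc (t₁ - ε) (t₁ + ε)) := by
      intro s hs
      simp only [mem_Icc] at hs ⊢
      constructor <;> linarith [hs.1, hs.2]
    have key := stay_right (f := fun s => f (2 * t₁ - s))
      (f' := fun s => (-1 : ℝ) • F (f (2 * t₁ - s))) (a := t₁) (b := t₁ + ε) (x := x)
      (R := R') (C := C) (by linarith) hC ?_ hR' ?_ ?_ ?_ ?_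
    · intro t ht
      have h1 : 2 * t₁ - t ∈ Icc t₁ (t₁ + ε) := by
        simp only [mem_Icc] at ht ⊢
        constructor <;> linarith [ht.1, ht.2]
      have := key (2 * t₁ - t) h1
      simpa using this
    · rw [add_sub_cancel_left, hCε]
    · exact hfc.comp (by fun_prop) hmap
    · show f (2 * t₁ - t₁) = x
      rw [show 2 * t₁ - t₁ = t₁ by ring, hf0]
    · intro t ht
      have hinner : HasDerivWithinAt (fun s : ℝ => 2 * t₁ - s) (-1) (Icc t₁ (t₁ + ε)) t :=
        ((hasDerivAt_id t).const_sub (2 * t₁)).hasDerivWithinAt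
      exact (hfd (2 * t₁ - t) (hmap ht)).scomp_of_eq t hinner hmap rfl
    · intro t ht hmem
      rw [norm_smul]
      simp only [norm_neg, norm_one, one_smul, norm_smul]
      simpa using hbd _ hmem
  refine ⟨ε, hε, f, hf0, fun t ht => ?_⟩
  have htI : t ∈ Icc (t₁ - ε) (t₁ + ε) := Ioo_subset_Icc_self ht
  have hmem : f t ∈ closedBall x R' := by
    rcases le_total t t₁ with h | h
    · exact hstayL t ⟨htI.1, h⟩
    · exact hstayR t ⟨h, htI.2⟩
  exact ⟨hR'H hmem, (hfd t htI).hasDerivAt (Icc_mem_nhds ht.1 ht.2)⟩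

end Aux

section Fwd

variable {X : Type*} [NormedAddCommGroup X] [NormedSpace ℝ X] [CompleteSpace X]

/-- Forward existence with Grönwall bound on `[t₀, t₀ + b)`. -/
lemma fwd {H : Set X} (hHopen : IsOpen H)
    {F G : X → X} (hFcont : ContinuousOn F H)
    {α k : ℝ} (hk : 0 < k) (hα : 0 ≤ α)
    (hFG : ∀ x ∈ H, ‖F x - G x‖ ≤ α)
    (hGlip : LipschitzOnWith (Real.toNNReal k) G H)
    (hFloclip : ∀ x ∈ H, ∃ (K : NNReal) (t : Set X), t ∈ nhdsWithin x H ∧ LipschitzOnWith K F t)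
    {μ : ℝ} (hμ : 0 < μ)
    {φ : ℝ → ℝ} (hφ : ∀ ξ : ℝ, 0 ≤ ξ → φ ξ = μ * Real.exp (ξ * k) + α / k * (Real.exp (ξ * k) - 1))
    {x₀ : X} {t₀ b : ℝ} (hb : 0 < b)
    {u : ℝ → X}
    (humem : ∀ t ∈ Ico t₀ (t₀ + b), u t ∈ H)
    (hucont : ContinuousOn u (Ico t₀ (t₀ + b)))
    (hu : ∀ t ∈ Ico t₀ (t₀ + b), HasDerivWithinAt u (G (u t)) (Ici t) t)
    (hu₀ : u t₀ = x₀)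
    (hball : ∀ t ∈ Ico t₀ (t₀ + b), closedBall (u t) (φ (t - t₀)) ⊆ H)
    {xt : X} (hxt : xt ∈ H) (hxtμ : ‖xt - x₀‖ ≤ μ) :
    ∃ v : ℝ → X, v t₀ = xt ∧
      (∀ t ∈ Ico t₀ (t₀ + b),
        v t ∈ H ∧ HasDerivWithinAt v (F (v t)) (Ici t) t ∧ ‖u t - v t‖ ≤ φ (t - t₀)) ∧
      (∀ t ∈ Ioo t₀ (t₀ + b), HasDerivAt v (F (v t)) t) := by
  have ht₀I : t₀ ∈ Ico t₀ (t₀ + b) := left_mem_Ico.2 (by linarith)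
  have hx₀H : x₀ ∈ H := hu₀ ▸ humem t₀ ht₀I
  have hkco : ((Real.toNNReal k : NNReal) : ℝ) = k := Real.coe_toNNReal k hk.le
  have hφmono : ∀ {s r : ℝ}, 0 ≤ s → s ≤ r → φ s ≤ φ r := by
    intro s r hs hsr
    rw [hφ s hs, hφ r (hs.trans hsr)]
    have h1 : Real.exp (s * k) ≤ Real.exp (r * k) := Real.exp_le_exp.2 (by nlinarith)
    have h2 : (0:ℝ) ≤ α / k := div_nonneg hα hk.le
    nlinarith
  have hφnn : ∀ {s : ℝ}, 0 ≤ s → 0 ≤ φ s := by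
    intro s hs
    rw [hφ s hs]
    have h1 : (1:ℝ) ≤ Real.exp (s * k) := Real.one_le_exp (by positivity)
    have h2 : (0:ℝ) ≤ α / k := div_nonneg hα hk.le
    nlinarith
  have hgb : ∀ ξ : ℝ, 0 ≤ ξ →
      gronwallBound μ ((Real.toNNReal k : NNReal) : ℝ) (0 + α) ξ = φ ξ := by
    intro ξ hξ
    rw [hkco, zero_add, gronwallBound_of_K_ne_0 hk.ne', hφ ξ hξ, mul_comm ξ k]
  set Sol : ℝ → (ℝ → X) → Prop := fun c f =>
    f t₀ = xt ∧ ContinuousOn f (Icc t₀ c) ∧ (∀ t ∈ Icc t₀ c, f t ∈ H) ∧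
    (∀ t ∈ Ico t₀ c, HasDerivWithinAt f (F (f t)) (Ici t) t) ∧
    (∀ t ∈ Ioo t₀ c, HasDerivAt f (F (f t)) t) with hSoldef
  have hgron : ∀ c ∈ Ico t₀ (t₀ + b), ∀ f, Sol c f →
      ∀ t ∈ Icc t₀ c, ‖u t - f t‖ ≤ φ (t - t₀) := by
    intro c hc f hf t ht
    have hsub : Icc t₀ c ⊆ Ico t₀ (t₀ + b) := fun s hs => ⟨hs.1, lt_of_le_of_lt hs.2 hc.2⟩
    have key := dist_le_of_approx_trajectories_ODE_of_mem
      (v := fun _ => G) (s := fun _ => H) (K := Real.toNNReal k)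
      (εf := 0) (εg := α) (δ := μ)
      (fun _ _ => hGlip)
      (hucont.mono hsub)
      (fun s hs => hu s (hsub (Ico_subset_Icc_self hs)))
      (fun s _ => (dist_self (G (u s))).le)
      (fun s hs => humem s (hsub (Ico_subset_Icc_self hs)))
      hf.2.1
      (fun s hs => hf.2.2.2.1 s hs)
      (fun s hs => by
        rw [dist_eq_norm]; exact hFG _ (hf.2.2.1 s (Ico_subset_Icc_self hs)))
      (fun s hs => hf.2.2.1 s (Ico_subset_Icc_self hs))
      (by rw [dist_eq_norm, hu₀, hf.1, norm_sub_rev]; exact hxtμ)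
      t ht
    rw [← dist_eq_norm]
    calc dist (u t) (f t) ≤ _ := key
      _ = φ (t - t₀) := hgb _ (by linarith [ht.1])
  have hsolconst : Sol t₀ (fun _ => xt) := by
    refine ⟨rfl, continuousOn_const, fun t _ => hxt, fun t ht => ?_, fun t ht => ?_⟩
    · exact absurd ht.2 (not_lt.2 ht.1)
    · exact absurd ht.2 (not_lt.2 ht.1.le)
  have claim : ∀ c ∈ Ico t₀ (t₀ + b), ∃ f, Sol c f := by
    rintro c₁ ⟨hc₁l, hc₁r⟩
    set A := {c | c ∈ Icc t₀ c₁ ∧ ∃ f, Sol c f} with hAdef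
    have ht₀A : t₀ ∈ A := ⟨left_mem_Icc.2 hc₁l, ⟨fun _ => xt, hsolconst⟩⟩
    have hAne : A.Nonempty := ⟨t₀, ht₀A⟩
    have hAbdd : BddAbove A := ⟨c₁, fun t ht => ht.1.2⟩
    set T := sSup A with hTdef
    have hT1 : t₀ ≤ T := le_csSup hAbdd ht₀A
    have hT2 : T ≤ c₁ := csSup_le hAne fun t ht => ht.1.2
    have hTb : T < t₀ + b := lt_of_le_of_lt hT2 hc₁r
    have hTA : T ∈ A := by
      rcases eq_or_lt_of_le hT1 with h | hT1'
      · rw [← h]; exact ht₀A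
      · -- t₀ < T : limit construction
        have hsel : ∀ t ∈ Ico t₀ T, ∃ p : ℝ × (ℝ → X), p.1 ∈ A ∧ t < p.1 ∧ Sol p.1 p.2 := by
          intro t ht
          obtain ⟨c, hcA, hc⟩ := exists_lt_of_lt_csSup hAne ht.2
          obtain ⟨f, hf⟩ := hcA.2
          exact ⟨(c, f), hcA, hc, hf⟩
        set g : ℝ → X := fun t => if h : t ∈ Ico t₀ T then (hsel t h).choose.2 t else xt
          with hgdef
        have hcons : ∀ t ∈ Ico t₀ T, ∀ c f, c ∈ A → t ≤ c → Sol c f → g t = f t := by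
          intro t ht c f hcA htc hf
          have h1 := (hsel t ht).choose_spec
          have hmin : t₀ ≤ min (hsel t ht).choose.1 c := le_min h1.1.1.1 hcA.1.1
          have heq := uniq_gen hHopen hFloclip hmin
            (h1.2.2.2.1.mono (Icc_subset_Icc_right (min_le_left _ _)))
            (hf.2.1.mono (Icc_subset_Icc_right (min_le_right _ _)))
            (fun s hs => h1.2.2.2.2.1 s (Icc_subset_Icc_right (min_le_left _ _) hs))
            (fun s hs => hf.2.2.1 s (Icc_subset_Icc_right (min_le_right _ _) hs))
            (fun s hs => h1.2.2.2.2.2.1 s (Ico_subset_Ico_right (min_le_left _ _) hs))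
            (fun s hs => hf.2.2.2.1 s (Ico_subset_Ico_right (min_le_right _ _) hs))
            (by rw [h1.2.2.1, hf.1])
          have h3 := heq ⟨ht.1, le_min h1.2.1.le htc⟩
          rw [hgdef]; simp only [dif_pos ht]; exact h3
        have hgrep : ∀ t ∈ Ico t₀ T, ∃ c f, c ∈ A ∧ t < c ∧ Sol c f ∧ g t = f t := by
          intro t ht
          have h1 := (hsel t ht).choose_spec
          exact ⟨_, _, h1.1, h1.2.1, h1.2.2,
            hcons t ht _ _ h1.1 h1.2.1.le h1.2.2⟩
        have hglocal : ∀ t ∈ Ico t₀ T, ∃ c f, c ∈ A ∧ t < c ∧ Sol c f ∧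
            ∀ s ∈ Ico t₀ (min c T), g s = f s := by
          intro t ht
          obtain ⟨c, f, hcA, htc, hf, _⟩ := hgrep t ht
          refine ⟨c, f, hcA, htc, hf, fun s hs => ?_⟩
          exact hcons s ⟨hs.1, lt_of_lt_of_le hs.2 (min_le_right _ _)⟩ c f hcA
            (le_of_lt (lt_of_lt_of_le hs.2 (min_le_left _ _))) hf
        have hg0 : g t₀ = xt := by
          rw [hcons t₀ ⟨le_rfl, hT1'⟩ t₀ (fun _ => xt) ht₀A le_rfl hsolconst]
        have hgmem : ∀ t ∈ Ico t₀ T, g t ∈ H := by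
          intro t ht
          obtain ⟨c, f, hcA, htc, hf, hgf⟩ := hgrep t ht
          rw [hgf]; exact hf.2.2.1 t ⟨ht.1, htc.le⟩
        have hgderiv : ∀ t ∈ Ioo t₀ T, HasDerivAt g (F (g t)) t := by
          intro t ht
          obtain ⟨c, f, hcA, htc, hf, heq⟩ := hglocal t ⟨ht.1.le, ht.2⟩
          have hgt : g t = f t := heq t ⟨ht.1.le, lt_min htc ht.2⟩
          have hnb : Ioo t₀ (min c T) ∈ 𝓝 t := Ioo_mem_nhds ht.1 (lt_min htc ht.2)
          have hd : HasDerivAt f (F (f t)) t := hf.2.2.2.2 t ⟨ht.1, htc⟩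
          rw [hgt]
          exact hd.congr_of_eventuallyEq
            (eventually_of_mem hnb fun s hs => heq s ⟨hs.1.le, hs.2⟩)
        have hgderiv0 : HasDerivWithinAt g (F (g t₀)) (Ici t₀) t₀ := by
          obtain ⟨c, f, hcA, htc, hf, heq⟩ := hglocal t₀ ⟨le_rfl, hT1'⟩
          have hg0' : g t₀ = f t₀ := heq t₀ ⟨le_rfl, lt_min htc hT1'⟩
          have hmemnb : Ico t₀ (min c T) ∈ 𝓝[Ici t₀] t₀ :=
            Ico_mem_nhdsGE (lt_min htc hT1')
          have hd : HasDerivWithinAt f (F (f t₀)) (Ici t₀) t₀ := hf.2.2.2.1 t₀ ⟨le_rfl, htc⟩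
          rw [hg0']
          exact hd.congr_of_eventuallyEq
            (eventually_of_mem hmemnb fun s hs => heq s hs) hg0'
        have hgcont : ∀ t ∈ Ico t₀ T, ContinuousWithinAt g (Ico t₀ T) t := by
          intro t ht
          rcases eq_or_lt_of_le ht.1 with h | h
          · rw [← h]
            exact hgderiv0.continuousWithinAt.mono Ico_subset_Ici_self
          · exact (hgderiv t ⟨h, ht.2⟩).continuousAt.continuousWithinAt
        have hgbd : ∀ t ∈ Ico t₀ T, ‖u t - g t‖ ≤ φ (t - t₀) := by
          intro t ht
          obtain ⟨c, f, hcA, htc, hf, hgf⟩ := hgrep t ht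
          rw [hgf]
          exact hgron c ⟨hcA.1.1, lt_of_le_of_lt hcA.1.2 hc₁r⟩ f hf t ⟨ht.1, htc.le⟩
        have hsubT : Icc t₀ T ⊆ Ico t₀ (t₀ + b) := fun s hs => ⟨hs.1, lt_of_le_of_lt hs.2 hTb⟩
        have hcu : ContinuousOn (fun s => u s - x₀) (Icc t₀ T) :=
          (hucont.mono hsubT).sub continuousOn_const
        obtain ⟨Mu, hMu⟩ :=
          (isCompact_Icc (a := t₀) (b := T)).exists_bound_of_continuousOn hcu
        have hMu0 : 0 ≤ Mu := (norm_nonneg _).trans (hMu t₀ (left_mem_Icc.2 hT1))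
        set M := α + ‖G x₀‖ + k * (φ (T - t₀) + Mu) with hMdef
        have hφT : 0 ≤ φ (T - t₀) := hφnn (by linarith)
        have hM0 : 0 ≤ M := by positivity
        have hFbd : ∀ t ∈ Ico t₀ T, ‖F (g t)‖ ≤ M := by
          intro t ht
          have hgH : g t ∈ H := hgmem t ht
          have h1 : ‖F (g t) - G (g t)‖ ≤ α := hFG _ hgH
          have h2 : dist (G (g t)) (G x₀) ≤ k * dist (g t) x₀ := by
            have := hGlip.dist_le_mul _ hgH _ hx₀H
            rwa [hkco] at this
          have h3 : ‖g t - x₀‖ ≤ φ (T - t₀) + Mu := by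
            have h4 : ‖g t - u t‖ ≤ φ (t - t₀) := by rw [norm_sub_rev]; exact hgbd t ht
            have h5 : ‖u t - x₀‖ ≤ Mu := hMu t ⟨ht.1, ht.2.le⟩
            have h6 : φ (t - t₀) ≤ φ (T - t₀) := hφmono (by linarith [ht.1]) (by linarith [ht.2])
            have h7 := dist_triangle (g t) (u t) x₀
            rw [dist_eq_norm, dist_eq_norm, dist_eq_norm] at h7
            linarith
          have h8 : F (g t) = (F (g t) - G (g t)) + ((G (g t) - G x₀) + G x₀) := by abel
          have h9 : ‖F (g t)‖ ≤ ‖F (g t) - G (g t)‖ + (‖G (g t) - G x₀‖ + ‖G x₀‖) := by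
            calc ‖F (g t)‖ = ‖(F (g t) - G (g t)) + ((G (g t) - G x₀) + G x₀)‖ := by rw [← h8]
              _ ≤ ‖F (g t) - G (g t)‖ + ‖(G (g t) - G x₀) + G x₀‖ := norm_add_le _ _
              _ ≤ ‖F (g t) - G (g t)‖ + (‖G (g t) - G x₀‖ + ‖G x₀‖) := by
                  have := norm_add_le (G (g t) - G x₀) (G x₀); linarith
          rw [dist_eq_norm, dist_eq_norm] at h2
          have h10 : k * ‖g t - x₀‖ ≤ k * (φ (T - t₀) + Mu) :=
            mul_le_mul_of_nonneg_left h3 hk.le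
          rw [hMdef]; linarith
        have hgLip : ∀ s₁ ∈ Ico t₀ T, ∀ s₂ ∈ Ico t₀ T, ‖g s₂ - g s₁‖ ≤ M * ‖s₂ - s₁‖ := by
          intro s₁ h₁ s₂ h₂
          refine (convex_Ico t₀ T).norm_image_sub_le_of_norm_hasDerivWithin_le
            (f' := fun s => F (g s)) (fun s hs => ?_) (fun s hs => hFbd s hs) h₁ h₂
          rcases eq_or_lt_of_le hs.1 with h | h
          · rw [← h]; exact hgderiv0.mono Ico_subset_Ici_self
          · exact (hgderiv s ⟨h, hs.2⟩).hasDerivWithinAt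
        have hnbT : (𝓝[Ico t₀ T] T).NeBot := by
          rw [← mem_closure_iff_nhdsWithin_neBot, closure_Ico hT1'.ne]
          exact right_mem_Icc.2 hT1
        have hcauchy : Cauchy (Filter.map g (𝓝[Ico t₀ T] T)) := by
          rw [Metric.cauchy_iff]
          refine ⟨Filter.map_neBot, fun ε hε => ?_⟩
          set δ := ε / (2 * (M + 1)) with hδdef
          have hδ : 0 < δ := by positivity
          refine ⟨g '' (Ico t₀ T ∩ Ioo (T - δ) (T + 1)),
            Filter.image_mem_map (Filter.inter_mem self_mem_nhdsWithin
              (nhdsWithin_le_nhds (Ioo_mem_nhds (by linarith) (by linarith)))), ?_⟩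
          rintro y ⟨s₁, hs₁, rfl⟩ z ⟨s₂, hs₂, rfl⟩
          have h1 := hgLip s₂ hs₂.1 s₁ hs₁.1
          have h2 : ‖s₁ - s₂‖ ≤ 2 * δ := by
            rw [Real.norm_eq_abs, abs_le]
            constructor <;> [skip; skip] <;>
              [linarith [hs₁.2.1, hs₂.1.2, hs₂.2.1, hs₁.1.2]; linarith [hs₁.2.1, hs₂.1.2, hs₂.2.1, hs₁.1.2]]
          rw [dist_eq_norm]
          calc ‖g s₁ - g s₂‖ ≤ M * ‖s₁ - s₂‖ := h1
            _ ≤ M * (2 * δ) := mul_le_mul_of_nonneg_left h2 hM0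
            _ < ε := by rw [hδdef]; rw [div_eq_iff (by positivity)] at *; nlinarith
        obtain ⟨xT, hxT⟩ := CompleteSpace.complete hcauchy
        have hgT : Tendsto g (𝓝[Ico t₀ T] T) (𝓝 xT) := hxT
        set gT : ℝ → X := fun t => if t < T then g t else xT with hgTdef
        have hgTeq : ∀ s < T, gT s = g s := fun s hs => if_pos hs
        have hgTT : gT T = xT := if_neg (lt_irrefl T)
        have hgTtend : Tendsto gT (𝓝[Ico t₀ T] T) (𝓝 xT) :=
          Filter.Tendsto.congr' (eventually_of_mem self_mem_nhdsWithin
            fun s hs => (hgTeq s hs.2).symm) hgT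
        have hU : Tendsto u (𝓝[Ico t₀ T] T) (𝓝 (u T)) :=
          (hucont T (hsubT (right_mem_Icc.2 hT1))).mono_left
            (nhdsWithin_mono _ (fun s hs => hsubT ⟨hs.1, hs.2.le⟩))
        have hxTu : ‖u T - xT‖ ≤ φ (T - t₀) := by
          have hdist : Tendsto (fun s => ‖u s - g s‖) (𝓝[Ico t₀ T] T) (𝓝 (‖u T - xT‖)) :=
            (hU.sub hgT).norm
          exact le_of_tendsto hdist (eventually_of_mem self_mem_nhdsWithin
            fun s hs => (hgbd s hs).trans (hφmono (by linarith [hs.1]) (by linarith [hs.2.le])))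
        have hxTH : xT ∈ H := by
          apply hball T ⟨hT1, hTb⟩
          rw [mem_closedBall, dist_eq_norm, norm_sub_rev]
          exact hxTu
        have hsolT : Sol T gT := by
          refine ⟨?_, ?_, ?_, ?_, ?_⟩
          · rw [hgTeq t₀ hT1', hg0]
          · intro s hs
            rcases eq_or_lt_of_le hs.2 with h | h
            · rw [ContinuousWithinAt, h, hgTT]
              have hicc : Icc t₀ T = Ico t₀ T ∪ {T} := (Ico_union_right hT1).symm
              rw [hicc, nhdsWithin_union, Filter.tendsto_sup]
              refine ⟨hgTtend, ?_⟩
              rw [nhdsWithin_singleton]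
              have := tendsto_pure_nhds gT T
              rwa [hgTT] at this
            · have hcg : ContinuousWithinAt g (Ico t₀ T) s := hgcont s ⟨hs.1, h⟩
              have heq2 : ContinuousWithinAt gT (Ico t₀ T) s :=
                hcg.congr (fun y hy => hgTeq y hy.2) (hgTeq s h)
              apply heq2.mono_of_mem_nhdsWithin
              apply mem_nhdsWithin.2
              exact ⟨Iio T, isOpen_Iio, h, fun y hy => ⟨hy.2.1, hy.1⟩⟩
          · intro s hs
            rcases eq_or_lt_of_le hs.2 with h | h
            · rw [h, hgTT]; exact hxTH
            · rw [hgTeq s h]; exact hgmem s ⟨hs.1, h⟩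
          · intro s hs
            have hnb : Iio T ∩ Ici s ∈ 𝓝[Ici s] s :=
              Filter.inter_mem (nhdsWithin_le_nhds (Iio_mem_nhds hs.2)) self_mem_nhdsWithin
            rcases eq_or_lt_of_le hs.1 with h | h
            · subst h
              rw [hgTeq t₀ hT1']
              exact hgderiv0.congr_of_eventuallyEq
                (eventually_of_mem hnb fun y hy => hgTeq y hy.1) (hgTeq t₀ hT1')
            · rw [hgTeq s hs.2]
              exact ((hgderiv s ⟨h, hs.2⟩).hasDerivWithinAt (s := Ici s)).congr_of_eventuallyEq
                (eventually_of_mem hnb fun y hy => hgTeq y hy.1) (hgTeq s hs.2)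
          · intro s hs
            have hnb : Iio T ∈ 𝓝 s := Iio_mem_nhds hs.2
            rw [hgTeq s hs.2]
            exact (hgderiv s hs).congr_of_eventuallyEq
              (eventually_of_mem hnb fun y hy => hgTeq y hy)
        exact ⟨⟨hT1, hT2⟩, gT, hsolT⟩
    -- now either T = c₁ or we can extend, contradiction
    rcases eq_or_lt_of_le hT2 with hTc | hTc
    · obtain ⟨_, f, hf⟩ := hTA
      exact ⟨f, hTc ▸ hf⟩
    · exfalso
      obtain ⟨hTI, fT, hfT⟩ := hTA
      have hfTH : fT T ∈ H := hfT.2.2.1 T (right_mem_Icc.2 hT1)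
      obtain ⟨ε, hε, h, hh0, hhsol⟩ := loc_ex hHopen hFcont hFloclip hfTH T
      set c' := min c₁ (T + ε / 2) with hc'def
      have hc'T : T < c' := lt_min hTc (by linarith)
      have hc'ε : c' < T + ε := lt_of_le_of_lt (min_le_right _ _) (by linarith)
      have hc'c₁ : c' ≤ c₁ := min_le_left _ _
      rcases eq_or_lt_of_le hT1 with hTt₀ | hTt₀
      · -- T = t₀ : use h directly
        have hSolc' : Sol c' h := by
          have hmemI : ∀ s ∈ Icc t₀ c', s ∈ Ioo (T - ε) (T + ε) := by
            intro s hs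
            constructor
            · rw [← hTt₀]; linarith [hs.1]
            · exact lt_of_le_of_lt hs.2 hc'ε
          refine ⟨?_, ?_, ?_, ?_, ?_⟩
          · rw [hTt₀, hh0, ← hTt₀, hfT.1]
          · exact fun s hs => ((hhsol s (hmemI s hs)).2.continuousAt).continuousWithinAt
          · exact fun s hs => (hhsol s (hmemI s hs)).1
          · exact fun s hs =>
              ((hhsol s (hmemI s (Ico_subset_Icc_self hs))).2).hasDerivWithinAt
          · exact fun s hs => (hhsol s (hmemI s (Ioo_subset_Icc_self hs))).2
        exact absurd (le_csSup hAbdd ⟨⟨hT1.trans hc'T.le, hc'c₁⟩, h, hSolc'⟩)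
          (not_le.2 hc'T)
      · -- t₀ < T : glue
        have hfTderivT : HasDerivWithinAt fT (F (fT T)) (Iic T) T := by
          have hmemIoo : Ioo t₀ T ∈ 𝓝[<] T := Ioo_mem_nhdsLT_of_mem ⟨hTt₀, le_rfl⟩
          apply hasDerivWithinAt_Iic_of_tendsto_deriv (s := Ioo t₀ T)
          · exact fun s hs => (hfT.2.2.2.2 s hs).differentiableAt.differentiableWithinAt
          · exact (hfT.2.1 T (right_mem_Icc.2 hT1)).mono Ioo_subset_Icc_self
          · exact hmemIoo
          · have hev : ∀ᶠ s in 𝓝[<] T, deriv fT s = F (fT s) :=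
              eventually_of_mem hmemIoo fun s hs => (hfT.2.2.2.2 s hs).deriv
            have hTc2 : Tendsto fT (𝓝[<] T) (𝓝 (fT T)) :=
              (hfT.2.1 T (right_mem_Icc.2 hT1)).mono_left
                (nhdsWithin_le_of_mem (Filter.mem_of_superset hmemIoo Ioo_subset_Icc_self))
            have hFt : Tendsto (fun s => F (fT s)) (𝓝[<] T) (𝓝 (F (fT T))) :=
              ((hFcont.continuousAt (hHopen.mem_nhds hfTH)).tendsto).comp hTc2
            exact Filter.Tendsto.congr' (hev.mono fun _ hx => hx.symm) hFt
        set a := max t₀ (T - ε / 2) with hadef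
        have haT : a < T := max_lt hTt₀ (by linarith)
        have hat₀ : t₀ ≤ a := le_max_left _ _
        have haε : T - ε < a := lt_of_lt_of_le (by linarith) (le_max_right _ _)
        have hmemIooh : ∀ s, a ≤ s → s ≤ c' → s ∈ Ioo (T - ε) (T + ε) :=
          fun s h1 h2 => ⟨lt_of_lt_of_le haε h1, lt_of_le_of_lt h2 hc'ε⟩
        have heqah : EqOn fT h (Icc a T) := by
          apply uniq_gen_bwd hHopen hFloclip haT.le
            (hfT.2.1.mono (Icc_subset_Icc_left hat₀))
            (fun s hs => ((hhsol s (hmemIooh s hs.1 (hs.2.trans hc'T.le))).2.continuousAt).continuousWithinAt)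
            (fun s hs => hfT.2.2.1 s ⟨hat₀.trans hs.1, hs.2⟩)
            (fun s hs => (hhsol s (hmemIooh s hs.1 (hs.2.trans hc'T.le))).1)
            (fun s hs => ?_)
            (fun s hs => ((hhsol s (hmemIooh s hs.1.le (hs.2.trans hc'T.le))).2).hasDerivWithinAt)
            (by rw [hh0])
          rcases eq_or_lt_of_le hs.2 with hsT | hsT
          · rw [hsT]; exact hfTderivT
          · exact ((hfT.2.2.2.2 s ⟨lt_of_le_of_lt hat₀ hs.1, hsT⟩).hasDerivWithinAt)
        set w : ℝ → X := fun t => if t ≤ T then fT t else h t with hwdef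
        have hw1 : ∀ s, s ≤ T → w s = fT s := fun s hs => if_pos hs
        have hw2 : ∀ s, a ≤ s → s ≤ c' → w s = h s := by
          intro s h1 h2
          rcases le_or_gt s T with hsT | hsT
          · rw [hw1 s hsT]; exact heqah ⟨h1, hsT⟩
          · exact if_neg (not_le.2 hsT)
        have hSolc' : Sol c' w := by
          refine ⟨?_, ?_, ?_, ?_, ?_⟩
          · rw [hw1 t₀ hT1, hfT.1]
          · intro s hs
            rcases lt_or_ge s T with hsT | hsT
            · have hfTc : ContinuousWithinAt fT (Icc t₀ T) s := hfT.2.1 s ⟨hs.1, hsT.le⟩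
              have h1 : ContinuousWithinAt fT (Icc t₀ c' ∩ Iio T) s :=
                hfTc.mono fun y hy => ⟨hy.1.1, hy.2.le⟩
              have h2 : ContinuousWithinAt w (Icc t₀ c' ∩ Iio T) s :=
                h1.congr (fun y hy => hw1 y hy.2.le) (hw1 s hsT.le)
              exact h2.mono_of_mem_nhdsWithin (Filter.inter_mem self_mem_nhdsWithin
                (nhdsWithin_le_nhds (Iio_mem_nhds hsT)))
            · have hhc : ContinuousAt h s :=
                (hhsol s (hmemIooh s ((haT.le.trans hsT)) hs.2)).2.continuousAt
              have h1 : ContinuousWithinAt h (Icc t₀ c' ∩ Ioi a) s := hhc.continuousWithinAt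
              have h2 : ContinuousWithinAt w (Icc t₀ c' ∩ Ioi a) s :=
                h1.congr (fun y hy => hw2 y hy.2.le hy.1.2) (hw2 s (haT.le.trans hsT) hs.2)
              exact h2.mono_of_mem_nhdsWithin (Filter.inter_mem self_mem_nhdsWithin
                (nhdsWithin_le_nhds (Ioi_mem_nhds (lt_of_lt_of_le haT hsT))))
          · intro s hs
            rcases le_or_gt s T with hsT | hsT
            · rw [hw1 s hsT]; exact hfT.2.2.1 s ⟨hs.1, hsT⟩
            · rw [hw2 s (haT.le.trans hsT.le) hs.2]
              exact (hhsol s (hmemIooh s (haT.le.trans hsT.le) hs.2)).1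
          · intro s hs
            rcases lt_or_ge s T with hsT | hsT
            · have hd : HasDerivWithinAt fT (F (fT s)) (Ici s) s := hfT.2.2.2.1 s ⟨hs.1, hsT⟩
              rw [hw1 s hsT.le]
              exact hd.congr_of_eventuallyEq
                (eventually_of_mem (Filter.inter_mem
                  (nhdsWithin_le_nhds (Iio_mem_nhds hsT)) self_mem_nhdsWithin)
                  fun y hy => hw1 y hy.1.le)
                (hw1 s hsT.le)
            · have hd : HasDerivAt h (F (h s)) s :=
                (hhsol s (hmemIooh s (haT.le.trans hsT) hs.2.le)).2
              rw [hw2 s (haT.le.trans hsT) hs.2.le]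
              refine (hd.hasDerivWithinAt (s := Ici s)).congr_of_eventuallyEq
                (eventually_of_mem (nhdsWithin_le_nhds
                  (Ioo_mem_nhds (lt_of_lt_of_le haT hsT) hs.2)) ?_)
                (hw2 s (haT.le.trans hsT) hs.2.le)
              exact fun y hy => hw2 y hy.1.le hy.2.le
          · intro s hs
            rcases le_or_gt s a with hsa | hsa
            · have hd : HasDerivAt fT (F (fT s)) s :=
                hfT.2.2.2.2 s ⟨hs.1, lt_of_le_of_lt hsa haT⟩
              rw [hw1 s (hsa.trans haT.le)]
              exact hd.congr_of_eventuallyEq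
                (eventually_of_mem (Iio_mem_nhds (lt_of_le_of_lt hsa haT))
                  fun y hy => hw1 y hy.le)
            · have hd : HasDerivAt h (F (h s)) s :=
                (hhsol s (hmemIooh s hsa.le hs.2.le)).2
              rw [hw2 s hsa.le hs.2.le]
              exact hd.congr_of_eventuallyEq
                (eventually_of_mem (Ioo_mem_nhds hsa hs.2)
                  fun y hy => hw2 y hy.1.le hy.2.le)
        exact absurd (le_csSup hAbdd ⟨⟨hT1.trans hc'T.le, hc'c₁⟩, w, hSolc'⟩)
          (not_le.2 hc'T)
  -- assemble the global forward solution
  have hcm : ∀ t ∈ Ico t₀ (t₀ + b), (t + t₀ + b) / 2 ∈ Ico t₀ (t₀ + b) ∧ t < (t + t₀ + b) / 2 := by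
    intro t ht
    refine ⟨⟨by linarith [ht.1], by linarith [ht.2]⟩, by linarith [ht.2]⟩
  set sol : ℝ → ℝ → X := fun c =>
    if hc : c ∈ Ico t₀ (t₀ + b) then (claim c hc).choose else fun _ => xt with hsoldef
  have hsolspec : ∀ c (hc : c ∈ Ico t₀ (t₀ + b)), Sol c (sol c) := by
    intro c hc
    rw [hsoldef]; simp only [dif_pos hc]; exact (claim c hc).choose_spec
  set V : ℝ → X := fun t =>
    if ht : t ∈ Ico t₀ (t₀ + b) then sol ((t + t₀ + b) / 2) t else xt with hVdef
  have hVcons : ∀ t (ht : t ∈ Ico t₀ (t₀ + b)), ∀ c (hc : c ∈ Ico t₀ (t₀ + b)), t ≤ c →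
      V t = sol c t := by
    intro t ht c hc htc
    have h1 := hsolspec c hc
    have h2 := hsolspec ((t + t₀ + b) / 2) (hcm t ht).1
    have hmin : t₀ ≤ min ((t + t₀ + b) / 2) c := le_min (hcm t ht).1.1 hc.1
    have heq := uniq_gen hHopen hFloclip hmin
      (h2.2.1.mono (Icc_subset_Icc_right (min_le_left _ _)))
      (h1.2.1.mono (Icc_subset_Icc_right (min_le_right _ _)))
      (fun s hs => h2.2.2.1 s (Icc_subset_Icc_right (min_le_left _ _) hs))
      (fun s hs => h1.2.2.1 s (Icc_subset_Icc_right (min_le_right _ _) hs))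
      (fun s hs => h2.2.2.2.1 s (Ico_subset_Ico_right (min_le_left _ _) hs))
      (fun s hs => h1.2.2.2.1 s (Ico_subset_Ico_right (min_le_right _ _) hs))
      (by rw [h2.1, h1.1])
    have h3 := heq ⟨ht.1, le_min (hcm t ht).2.le htc⟩
    rw [hVdef]; simp only [dif_pos ht]; exact h3
  have hV0 : V t₀ = xt := by
    rw [hVcons t₀ ht₀I ((t₀ + t₀ + b) / 2) (hcm t₀ ht₀I).1 (hcm t₀ ht₀I).2.le,
      (hsolspec _ (hcm t₀ ht₀I).1).1]
  refine ⟨V, hV0, ?_, ?_⟩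
  · intro t ht
    have h2 := hsolspec ((t + t₀ + b) / 2) (hcm t ht).1
    have hVt : V t = sol ((t + t₀ + b) / 2) t :=
      hVcons t ht _ (hcm t ht).1 (hcm t ht).2.le
    refine ⟨?_, ?_, ?_⟩
    · rw [hVt]; exact h2.2.2.1 t ⟨ht.1, (hcm t ht).2.le⟩
    · have hd : HasDerivWithinAt (sol ((t + t₀ + b) / 2))
          (F (sol ((t + t₀ + b) / 2) t)) (Ici t) t :=
        h2.2.2.2.1 t ⟨ht.1, (hcm t ht).2⟩
      rw [hVt]
      refine hd.congr_of_eventuallyEq ?_ hVt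
      refine eventually_of_mem (Filter.inter_mem self_mem_nhdsWithin
        (nhdsWithin_le_nhds (Iio_mem_nhds (hcm t ht).2))) ?_
      intro s hs
      exact hVcons s ⟨ht.1.trans hs.1, lt_trans hs.2 (hcm t ht).1.2⟩ _ (hcm t ht).1 hs.2.le
    · rw [hVt]
      exact hgron _ (hcm t ht).1 _ h2 t ⟨ht.1, (hcm t ht).2.le⟩
  · intro t ht
    have ht' : t ∈ Ico t₀ (t₀ + b) := ⟨ht.1.le, ht.2⟩
    have h2 := hsolspec ((t + t₀ + b) / 2) (hcm t ht').1
    have hVt : V t = sol ((t + t₀ + b) / 2) t :=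
      hVcons t ht' _ (hcm t ht').1 (hcm t ht').2.le
    have hd : HasDerivAt (sol ((t + t₀ + b) / 2)) (F (sol ((t + t₀ + b) / 2) t)) t :=
      h2.2.2.2.2 t ⟨ht.1, (hcm t ht').2⟩
    rw [hVt]
    refine hd.congr_of_eventuallyEq ?_
    refine eventually_of_mem (Ioo_mem_nhds ht.1 (hcm t ht').2) ?_
    intro s hs
    exact hVcons s ⟨hs.1.le, hs.2.trans (hcm t ht').1.2⟩ _ (hcm t ht').1 hs.2.le

end Fwd

/-- Lemma 2.2 (Dieudonné comparison of ODE solutions). -/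
theorem stmt_0
    {X : Type*} [NormedAddCommGroup X] [NormedSpace ℝ X] [CompleteSpace X]
    (H : Set X) (hHopen : IsOpen H) (hHconv : Convex ℝ H)
    (F G : X → X) (hFcont : ContinuousOn F H) (hGcont : ContinuousOn G H)
    (α k : ℝ) (hk : 0 < k) (hα : 0 ≤ α)
    (hFG : ∀ x ∈ H, ‖F x - G x‖ ≤ α)
    (hGlip : LipschitzOnWith (Real.toNNReal k) G H)
    (hFloclip : ∀ x ∈ H, ∃ (K : NNReal) (t : Set X), t ∈ nhdsWithin x H ∧ LipschitzOnWith K F t)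
    (μ : ℝ) (hμ : 0 < μ)
    (φ : ℝ → ℝ) (hφ : ∀ ξ : ℝ, 0 ≤ ξ → φ ξ = μ * Real.exp (ξ * k) + α / k * (Real.exp (ξ * k) - 1))
    (x₀ : X) (hx₀ : x₀ ∈ H) (t₀ b : ℝ) (hb : 0 < b)
    (u : ℝ → X)
    (humem : ∀ t ∈ Ioo (t₀ - b) (t₀ + b), u t ∈ H)
    (hu : ∀ t ∈ Ioo (t₀ - b) (t₀ + b), HasDerivAt u (G (u t)) t)
    (hu₀ : u t₀ = x₀)
    (hball : ∀ t ∈ Ioo (t₀ - b) (t₀ + b), closedBall (u t) (φ |t - t₀|) ⊆ H) :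
    ∀ xt ∈ H, ‖xt - x₀‖ ≤ μ →
      ∃ v : ℝ → X,
        ((∀ t ∈ Ioo (t₀ - b) (t₀ + b), v t ∈ H ∧ HasDerivAt v (F (v t)) t) ∧ v t₀ = xt) ∧
        (∀ w : ℝ → X,
          ((∀ t ∈ Ioo (t₀ - b) (t₀ + b), w t ∈ H ∧ HasDerivAt w (F (w t)) t) ∧ w t₀ = xt) →
          EqOn v w (Ioo (t₀ - b) (t₀ + b))) ∧
        (∀ t ∈ Ioo (t₀ - b) (t₀ + b), ‖u t - v t‖ ≤ φ |t - t₀|) := by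
  intro xt hxtH hxtμ
  have hIco : Ico t₀ (t₀ + b) ⊆ Ioo (t₀ - b) (t₀ + b) :=
    fun s hs => ⟨by linarith [hs.1], hs.2⟩
  -- forward solution
  obtain ⟨vf, hvf0, hvfIco, hvfIoo⟩ := fwd hHopen hFcont hk hα hFG hGlip hFloclip hμ hφ hb
    (fun t ht => humem t (hIco ht))
    (fun t ht => (hu t (hIco ht)).continuousAt.continuousWithinAt)
    (fun t ht => (hu t (hIco ht)).hasDerivWithinAt)
    hu₀
    (fun t ht => by
      have h1 := hball t (hIco ht)
      rwa [abs_of_nonneg (by linarith [ht.1] : (0:ℝ) ≤ t - t₀)] at h1)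
    hxtH hxtμ
  -- backward solution via time reflection
  have hmapr : ∀ t ∈ Ico t₀ (t₀ + b), 2 * t₀ - t ∈ Ioo (t₀ - b) (t₀ + b) := by
    intro t ht
    exact ⟨by linarith [ht.2], by linarith [ht.1]⟩
  have hFG' : ∀ x ∈ H, ‖-F x - -G x‖ ≤ α := by
    intro x hx
    rw [neg_sub_neg, norm_sub_rev]
    exact hFG x hx
  have hGlip' : LipschitzOnWith (Real.toNNReal k) (fun y => -G y) H := by
    have h1 := LipschitzWith.id.neg.comp_lipschitzOnWith hGlip
    simpa [Function.comp_def] using h1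
  have hFloclip' : ∀ x ∈ H, ∃ (K : NNReal) (t : Set X), t ∈ nhdsWithin x H ∧
      LipschitzOnWith K (fun y => -F y) t := by
    intro x hx
    obtain ⟨K, t, ht, hl⟩ := hFloclip x hx
    exact ⟨1 * K, t, ht, LipschitzWith.id.neg.comp_lipschitzOnWith hl⟩
  obtain ⟨vb', hvb'0, hvb'Ico, hvb'Ioo⟩ := fwd (F := fun y => -F y) (G := fun y => -G y)
    (u := fun t => u (2 * t₀ - t)) hHopen hFcont.neg hk hα hFG' hGlip' hFloclip' hμ hφ hb
    (fun t ht => humem _ (hmapr t ht))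
    (fun t ht => ((hu _ (hmapr t ht)).continuousAt.comp
      ((continuous_const.sub continuous_id).continuousAt)).continuousWithinAt)
    (fun t ht => by
      have hinner : HasDerivAt (fun s : ℝ => 2 * t₀ - s) (-1) t :=
        (hasDerivAt_id t).const_sub (2 * t₀)
      have hd := (hu _ (hmapr t ht)).scomp_of_eq t hinner rfl
      simpa [Function.comp_def] using hd.hasDerivWithinAt)
    (by show u (2 * t₀ - t₀) = x₀; rw [show 2 * t₀ - t₀ = t₀ by ring]; exact hu₀)
    (fun t ht => by
      have h1 := hball (2 * t₀ - t) (hmapr t ht)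
      rwa [show |2 * t₀ - t - t₀| = t - t₀ by
        rw [abs_of_nonpos (by linarith [ht.1] : 2 * t₀ - t - t₀ ≤ 0)]; ring] at h1)
    hxtH hxtμ
  -- glue
  set v : ℝ → X := fun t => if t < t₀ then vb' (2 * t₀ - t) else vf t with hvdef
  have hveqb : ∀ s, s < t₀ → v s = vb' (2 * t₀ - s) := by
    intro s hs; simp only [hvdef]; exact if_pos hs
  have hveqf : ∀ s, t₀ ≤ s → v s = vf s := by
    intro s hs; simp only [hvdef]; exact if_neg (not_lt.2 hs)
  have hv0 : v t₀ = xt := by rw [hveqf t₀ le_rfl, hvf0]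
  have ht₀I : t₀ ∈ Ico t₀ (t₀ + b) := left_mem_Ico.2 (by linarith)
  have hvb0 : vb' (2 * t₀ - t₀) = xt := by rw [show 2 * t₀ - t₀ = t₀ by ring]; exact hvb'0
  have hIic : ∀ s ∈ Iic t₀, v s = vb' (2 * t₀ - s) := by
    intro s hs
    rcases lt_or_eq_of_le (mem_Iic.1 hs) with h | h
    · exact hveqb s h
    · rw [h, hv0, hvb0]
  have hbderiv : ∀ t, t₀ - b < t → t < t₀ →
      HasDerivAt (fun s => vb' (2 * t₀ - s)) (F (vb' (2 * t₀ - t))) t := by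
    intro t h1 h2
    have hs' : 2 * t₀ - t ∈ Ioo t₀ (t₀ + b) := ⟨by linarith, by linarith⟩
    have hinner : HasDerivAt (fun s : ℝ => 2 * t₀ - s) (-1) t :=
      (hasDerivAt_id t).const_sub (2 * t₀)
    have hd := (hvb'Ioo _ hs').scomp_of_eq t hinner rfl
    simpa [Function.comp_def] using hd
  have hderivt₀ : HasDerivAt v (F (v t₀)) t₀ := by
    have h1 : HasDerivWithinAt v (F xt) (Ici t₀) t₀ := by
      have h2 := (hvfIco t₀ ht₀I).2.1
      rw [hvf0] at h2
      exact h2.congr_of_eventuallyEq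
        (eventually_of_mem self_mem_nhdsWithin fun y (hy : y ∈ Ici t₀) => hveqf y hy)
        (by rw [hv0, hvf0])
    have h2 : HasDerivWithinAt v (F xt) (Iic t₀) t₀ := by
      have houter := (hvb'Ico t₀ ht₀I).2.1
      have hinner : HasDerivWithinAt (fun s : ℝ => 2 * t₀ - s) (-1) (Iic t₀) t₀ :=
        ((hasDerivAt_id t₀).const_sub (2 * t₀)).hasDerivWithinAt
      have hmapsto : MapsTo (fun s : ℝ => 2 * t₀ - s) (Iic t₀) (Ici t₀) := by
        intro s hs
        simp only [mem_Iic] at hs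
        simp only [mem_Ici]
        linarith
      have hd := houter.scomp_of_eq t₀ hinner hmapsto (by ring)
      have hd2 : HasDerivWithinAt (fun s => vb' (2 * t₀ - s)) (F xt) (Iic t₀) t₀ := by
        simpa [hvb'0, Function.comp_def] using hd
      exact hd2.congr_of_eventuallyEq
        (eventually_of_mem self_mem_nhdsWithin fun y hy => hIic y hy)
        (hIic t₀ (mem_Iic.2 le_rfl))
    have h3 := h2.union h1
    rw [Iic_union_Ici, hasDerivWithinAt_univ] at h3
    rw [hv0]
    exact h3
  have hprop : ∀ t ∈ Ioo (t₀ - b) (t₀ + b), v t ∈ H ∧ HasDerivAt v (F (v t)) t := by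
    intro t ht
    rcases lt_trichotomy t t₀ with h | h | h
    · have hs' : 2 * t₀ - t ∈ Ico t₀ (t₀ + b) := ⟨by linarith, by linarith [ht.1]⟩
      refine ⟨?_, ?_⟩
      · rw [hveqb t h]; exact (hvb'Ico _ hs').1
      · rw [hveqb t h]
        exact (hbderiv t ht.1 h).congr_of_eventuallyEq
          (eventually_of_mem (Iio_mem_nhds h) fun y hy => hveqb y hy)
    · rw [h]
      exact ⟨by rw [hv0]; exact hxtH, hderivt₀⟩
    · refine ⟨?_, ?_⟩
      · rw [hveqf t h.le]; exact (hvfIco t ⟨h.le, ht.2⟩).1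
      · rw [hveqf t h.le]
        exact (hvfIoo t ⟨h, ht.2⟩).congr_of_eventuallyEq
          (eventually_of_mem (Ioi_mem_nhds h) fun y hy => hveqf y (le_of_lt hy))
  have hbnd : ∀ t ∈ Ioo (t₀ - b) (t₀ + b), ‖u t - v t‖ ≤ φ |t - t₀| := by
    intro t ht
    rcases lt_or_ge t t₀ with h | h
    · have hs' : 2 * t₀ - t ∈ Ico t₀ (t₀ + b) := ⟨by linarith, by linarith [ht.1]⟩
      have hbb := (hvb'Ico (2 * t₀ - t) hs').2.2
      have hbb' : ‖u t - vb' (2 * t₀ - t)‖ ≤ φ (t₀ - t) := by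
        have e1 : u t = u (2 * t₀ - (2 * t₀ - t)) := by
          rw [show 2 * t₀ - (2 * t₀ - t) = t by ring]
        have e2 : t₀ - t = 2 * t₀ - t - t₀ := by ring
        rw [e1, e2]
        exact hbb
      rw [hveqb t h, show |t - t₀| = t₀ - t by
        rw [abs_of_neg (by linarith : t - t₀ < 0)]; ring]
      exact hbb'
    · have hbb := (hvfIco t ⟨h, ht.2⟩).2.2
      rw [hveqf t h, abs_of_nonneg (by linarith : (0:ℝ) ≤ t - t₀)]
      exact hbb
  refine ⟨v, ⟨hprop, hv0⟩, ?_, hbnd⟩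
  rintro w ⟨hw, hw0⟩ t ht
  rcases le_or_gt t₀ t with h | h
  · have hsub : Icc t₀ t ⊆ Ioo (t₀ - b) (t₀ + b) :=
      fun s hs => ⟨by linarith [hs.1], lt_of_le_of_lt hs.2 ht.2⟩
    have heq := uniq_gen hHopen hFloclip h
      (fun s hs => ((hprop s (hsub hs)).2.continuousAt.continuousWithinAt))
      (fun s hs => ((hw s (hsub hs)).2.continuousAt.continuousWithinAt))
      (fun s hs => (hprop s (hsub hs)).1)
      (fun s hs => (hw s (hsub hs)).1)
      (fun s hs => (hprop s (hsub (Ico_subset_Icc_self hs))).2.hasDerivWithinAt)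
      (fun s hs => (hw s (hsub (Ico_subset_Icc_self hs))).2.hasDerivWithinAt)
      (by rw [hv0, hw0])
    exact heq (right_mem_Icc.2 h)
  · have hsub : Icc t t₀ ⊆ Ioo (t₀ - b) (t₀ + b) :=
      fun s hs => ⟨lt_of_lt_of_le ht.1 hs.1, by linarith [hs.2]⟩
    have heq := uniq_gen_bwd hHopen hFloclip h.le
      (fun s hs => ((hprop s (hsub hs)).2.continuousAt.continuousWithinAt))
      (fun s hs => ((hw s (hsub hs)).2.continuousAt.continuousWithinAt))
      (fun s hs => (hprop s (hsub hs)).1)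
      (fun s hs => (hw s (hsub hs)).1)
      (fun s hs => (hprop s (hsub (Ioc_subset_Icc_self hs))).2.hasDerivWithinAt)
      (fun s hs => (hw s (hsub (Ioc_subset_Icc_self hs))).2.hasDerivWithinAt)
      (by rw [hv0, hw0])
    exact heq (left_mem_Icc.2 h.le)
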